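/- Let R be a finite ring with identity, J(R) its Jacobson radical, and A a subset of R; let Ā denote the image of A in R/J(R) under the quotient map. Then Ā is a maximal independent set of the unitary Cayley graph Γ(R/J(R)) if and only if A + J(R) is a maximal independent set of Γ(R). -/

import Mathlib

open Pointwise

/-- The unitary Cayley graph of a ring `R`: vertices are elements of `R`,
and `x`, `y` are adjacent iff `x - y` is a unit. -/
def unitaryCayley (R : Type*) [Ring R] : SimpleGraph R where
  Adj x y := x ≠ y ∧ IsUnit (x - y)
  symm := by
    constructor
    rintro x y ⟨hne, hu⟩
    exact ⟨hne.symm, by simpa [neg_sub] using hu.neg⟩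
  loopless := by constructor; rintro x ⟨h, -⟩; exact h rfl

/-- A set of vertices is independent if its elements are pairwise nonadjacent. -/
def IsIndepSet {V : Type*} (G : SimpleGraph V) (A : Set V) : Prop :=
  A.Pairwise fun x y => ¬ G.Adj x y

/-- A maximal independent set. -/
def IsMaxIndepSet {V : Type*} (G : SimpleGraph V) (A : Set V) : Prop :=
  IsIndepSet G A ∧ ∀ B : Set V, IsIndepSet G B → A ⊆ B → A = B

/-- A graph is well-covered if all its maximal independent sets have the same cardinality. -/
def WellCovered {V : Type*} (G : SimpleGraph V) : Prop :=
  ∀ A B : Set V, IsMaxIndepSet G A → IsMaxIndepSet G B → A.ncard = B.ncard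

/-- The reduced `k`-diagonal matrix `D_k(a)`:  the `(i, j)` entry is `a (i - k)`
when `j = i + k` (mod `n`) and `i ≠ k`, and `0` otherwise. -/
def Dmat {n : ℕ} (F : Type*) [Field F] (k : Fin n) (a : Fin n → F) :
    Matrix (Fin n) (Fin n) F :=
  Matrix.of fun i j => if i ≠ k ∧ j = i + k then a (i - k) else 0

/-- The family `𝒟` of all reduced diagonal matrices `D_k(a₁, …, a_{n-1})`. -/
def DSet {n : ℕ} (F : Type*) [Field F] : Set (Matrix (Fin n) (Fin n) F) :=
  {M | ∃ (k : Fin n) (a : Fin n → F), M = Dmat F k a}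

/-- The Jacobson radical of a (possibly noncommutative) ring, as a two-sided ideal. -/
noncomputable def jacRad (R : Type*) [Ring R] : TwoSidedIdeal R :=
  (⊥ : TwoSidedIdeal R).jacobson

/-- The quotient of `R` by its Jacobson radical. -/
abbrev JacQuot (R : Type*) [Ring R] := (jacRad R).ringCon.Quotient

/-- The quotient map `R → R/J(R)`. -/
noncomputable def jacMk (R : Type*) [Ring R] : R →+* JacQuot R := (jacRad R).ringCon.mk'

section Aux
variable (R : Type*) [Ring R]

lemma jacMk_eq_iff (x y : R) : jacMk R x = jacMk R y ↔ x - y ∈ jacRad R := by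
  show ((x : (jacRad R).ringCon.Quotient) = y) ↔ _
  rw [RingCon.eq, TwoSidedIdeal.rel_iff]

lemma jacMk_surj : Function.Surjective (jacMk R) := fun q => Quot.exists_rep q

lemma isUnit_one_add (j : R) (hj : j ∈ jacRad R) : IsUnit (1 + j) := by
  obtain ⟨z, hz⟩ := TwoSidedIdeal.mem_jacobson_iff.mp hj 1
  rw [TwoSidedIdeal.mem_bot, sub_eq_zero, mul_one] at hz
  have h1 : z * (1 + j) = 1 := by rw [mul_add, mul_one, add_comm]; exact hz
  have hz' : -(z * j) ∈ jacRad R := (jacRad R).neg_mem ((jacRad R).mul_mem_left z j hj)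
  obtain ⟨w, hw⟩ := TwoSidedIdeal.mem_jacobson_iff.mp hz' 1
  rw [TwoSidedIdeal.mem_bot, sub_eq_zero, mul_one] at hw
  have h2 : w * z = 1 := by
    have hzz : z = 1 + -(z * j) := by rw [← sub_eq_add_neg]; exact (eq_sub_of_add_eq' hz)
    rw [hzz, mul_add, mul_one, add_comm]; exact hw
  have hwz : w = 1 + j := by
    calc w = w * (z * (1 + j)) := by rw [h1, mul_one]
    _ = (w * z) * (1 + j) := by rw [mul_assoc]
    _ = 1 + j := by rw [h2, one_mul]
  exact ⟨⟨1 + j, z, hwz ▸ h2, h1⟩, rfl⟩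

lemma isUnit_jacMk_iff (x : R) : IsUnit (jacMk R x) ↔ IsUnit x := by
  constructor
  · rintro ⟨u, hu⟩
    obtain ⟨y, hy⟩ := jacMk_surj R (↑u⁻¹)
    have hxy : jacMk R (x * y) = 1 := by rw [map_mul, ← hu, hy, u.mul_inv]
    have hyx : jacMk R (y * x) = 1 := by rw [map_mul, hy, ← hu, u.inv_mul]
    rw [show (1 : JacQuot R) = jacMk R 1 from (map_one _).symm, jacMk_eq_iff] at hxy hyx
    have h1 : IsUnit (x * y) := by
      have := isUnit_one_add R (x * y - 1) hxy
      simpa using this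
    have h2 : IsUnit (y * x) := by
      have := isUnit_one_add R (y * x - 1) hyx
      simpa using this
    obtain ⟨u1, hu1⟩ := h1
    obtain ⟨u2, hu2⟩ := h2
    have hleft : (↑u2⁻¹ * y) * x = 1 := by rw [mul_assoc, ← hu2, u2.inv_mul]
    have hright : x * (y * ↑u1⁻¹) = 1 := by rw [← mul_assoc, ← hu1, u1.mul_inv]
    refine ⟨⟨x, y * ↑u1⁻¹, hright, ?_⟩, rfl⟩
    calc (y * ↑u1⁻¹) * x = ((↑u2⁻¹ * y) * x) * ((y * ↑u1⁻¹) * x) := by rw [hleft, one_mul]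
    _ = (↑u2⁻¹ * y) * (x * (y * ↑u1⁻¹)) * x := by simp only [mul_assoc]
    _ = 1 := by rw [hright, mul_one]; exact hleft
  · exact fun h => h.map _

lemma adjQ_iff (x y : R) :
    (unitaryCayley (JacQuot R)).Adj (jacMk R x) (jacMk R y) ↔
      jacMk R x ≠ jacMk R y ∧ IsUnit (x - y) := by
  show (_ ∧ IsUnit (jacMk R x - jacMk R y)) ↔ _
  rw [← map_sub, isUnit_jacMk_iff]

lemma adjQ_of_adjR {x y : R} (h : (unitaryCayley R).Adj x y) :
    (unitaryCayley (JacQuot R)).Adj (jacMk R x) (jacMk R y) := by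
  obtain ⟨hne, hu⟩ := h
  rw [adjQ_iff]
  refine ⟨fun heq => ?_, hu⟩
  rw [jacMk_eq_iff] at heq
  obtain ⟨u, hu'⟩ := hu
  have h1 : (1 : R) ∈ jacRad R := by
    have := (jacRad R).mul_mem_left (↑u⁻¹) _ heq
    rwa [← hu', u.inv_mul] at this
  have h0 : IsUnit (0 : R) := by
    have := isUnit_one_add R (-1) ((jacRad R).neg_mem h1)
    simpa using this
  obtain ⟨v, hv⟩ := h0
  have : (0 : R) = 1 := by
    have := v.mul_inv
    rw [hv] at this
    simpa using this
  exact hne (by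
    have : Subsingleton R := subsingleton_of_zero_eq_one this
    exact Subsingleton.elim x y)

lemma adjR_of_adjQ {x y : R}
    (h : (unitaryCayley (JacQuot R)).Adj (jacMk R x) (jacMk R y)) :
    (unitaryCayley R).Adj x y := by
  rw [adjQ_iff] at h
  exact ⟨fun heq => h.1 (heq ▸ rfl), h.2⟩

lemma mem_addJ_iff (A : Set R) (b : R) :
    b ∈ A + (jacRad R : Set R) ↔ jacMk R b ∈ jacMk R '' A := by
  constructor
  · rintro ⟨a, ha, j, hj, rfl⟩
    refine ⟨a, ha, ?_⟩
    rw [jacMk_eq_iff]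
    simpa using (jacRad R).neg_mem hj
  · rintro ⟨a, ha, hab⟩
    rw [jacMk_eq_iff] at hab
    exact ⟨a, ha, b - a, by simpa using (jacRad R).neg_mem hab, by show a + (b - a) = b; rw [add_comm, sub_add_cancel]⟩

end Aux

theorem stmt8 (R : Type*) [Ring R] [Finite R] (A : Set R) :
    IsMaxIndepSet (unitaryCayley (JacQuot R)) (jacMk R '' A) ↔
      IsMaxIndepSet (unitaryCayley R) (A + (jacRad R : Set R)) := by
  have hAsub : A ⊆ A + (jacRad R : Set R) := fun a ha =>
    ⟨a, ha, 0, (jacRad R).zero_mem, add_zero a⟩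
  -- independence transfer
  have hindep : ∀ S : Set R, IsIndepSet (unitaryCayley (JacQuot R)) (jacMk R '' S) ↔
      IsIndepSet (unitaryCayley R) {x | jacMk R x ∈ jacMk R '' S} := by
    intro S
    constructor
    · rintro h x hx y hy hne hadj
      exact h hx hy (adjQ_of_adjR R hadj).ne (adjQ_of_adjR R hadj)
    · rintro h _ ⟨x, hx, rfl⟩ _ ⟨y, hy, rfl⟩ hne hadj
      exact h ⟨x, hx, rfl⟩ ⟨y, hy, rfl⟩ (fun e => hne (e ▸ rfl)) (adjR_of_adjQ R hadj)
  have hsat : A + (jacRad R : Set R) = {x | jacMk R x ∈ jacMk R '' A} := by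
    ext b; exact mem_addJ_iff R A b
  constructor
  · rintro ⟨hind, hmax⟩
    constructor
    · rw [hsat]; exact (hindep A).mp hind
    · intro B hB hsub
      -- quotient image of B is independent
      have hBQ : IsIndepSet (unitaryCayley (JacQuot R)) (jacMk R '' B) := by
        rintro _ ⟨x, hx, rfl⟩ _ ⟨y, hy, rfl⟩ hne hadj
        have := adjR_of_adjQ R hadj
        exact hB hx hy this.1 this
      have hABQ : jacMk R '' A = jacMk R '' B :=
        hmax _ hBQ (Set.image_mono (hAsub.trans hsub))
      apply Set.Subset.antisymm hsub
      intro b hb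
      rw [mem_addJ_iff, hABQ]
      exact ⟨b, hb, rfl⟩
  · rintro ⟨hind, hmax⟩
    constructor
    · rw [hsat] at hind; exact (hindep A).mpr hind
    · intro C hC hsub
      set B := jacMk R ⁻¹' C with hBdef
      have hBind : IsIndepSet (unitaryCayley R) B := by
        rintro x hx y hy hne hadj
        have hadjQ := adjQ_of_adjR R hadj
        exact hC hx hy hadjQ.ne hadjQ
      have hABsub : A + (jacRad R : Set R) ⊆ B := by
        intro b hb
        rw [mem_addJ_iff] at hb
        exact hsub hb
      have hAB : A + (jacRad R : Set R) = B := hmax _ hBind hABsub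
      apply Set.Subset.antisymm hsub
      intro c hc
      obtain ⟨x, rfl⟩ := jacMk_surj R c
      have hxB : x ∈ B := hc
      rw [← hAB, mem_addJ_iff] at hxB
      exact hxB
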